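/- Let X, Y, Z be pairwise disjoint node sets in a maximal PDAG G such that G is b-amenable relative to (X,Y) and Z ∩ b-Forb(X,Y,G) = ∅. Let D be a DAG represented by G and let p = ⟨X = V_0, V_1, …, V_k = Y⟩ be a proper non-causal path in D from X ∈ X to Y ∈ Y that is d-connecting given Z. If 0 < i < j ≤ k and G contains an edge between V_i and V_j, then the path p*(X, V_i) ⊕ ⟨V_i, V_j⟩ ⊕ p*(V_j, Y) in G (where p* is the path in G corresponding to p) is a proper b-non-causal path in G. In particular, taking j = i+1, p* itself is a proper b-non-causal path in G. -/

import Mathlib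

/-- A partially directed graph with at most one edge between any two nodes
and no directed cycles (a PDAG). -/
structure PDAG (V : Type) where
  dir : V → V → Prop
  undir : V → V → Prop
  undir_symm : ∀ {x y}, undir x y → undir y x
  undir_irrefl : ∀ x, ¬ undir x x
  dir_not_undir : ∀ x y, dir x y → ¬ undir x y
  acyclic : ∀ x, ¬ Relation.TransGen dir x x

namespace PDAG

variable {V : Type}

/-- There is an undirected edge between `x` and `y`. -/
def undirE (G : PDAG V) (x y : V) : Prop := G.undir x y ∨ G.undir y x

/-- `x` and `y` are adjacent. -/
def adj (G : PDAG V) (x y : V) : Prop := G.dir x y ∨ G.dir y x ∨ G.undirE x y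

/-- The list of consecutive pairs of a list. -/
def consPairs (p : List V) : List (V × V) := p.zip p.tail

/-- The list of consecutive triples of a list. -/
def triples : List V → List (V × V × V)
  | a :: b :: c :: rest => (a, b, c) :: triples (b :: c :: rest)
  | _ => []

/-- `p` is a path in `G`: at least two distinct nodes, pairwise successive adjacency. -/
def IsPath (G : PDAG V) (p : List V) : Prop :=
  2 ≤ p.length ∧ p.Nodup ∧ ∀ e ∈ consPairs p, G.adj e.1 e.2

/-- `p` is a path in `G` from `x` to `y`. -/
def PathFromTo (G : PDAG V) (p : List V) (x y : V) : Prop :=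
  G.IsPath p ∧ p.head? = some x ∧ p.getLast? = some y

/-- `p` is a causal (fully directed) path in `G`. -/
def IsCausal (G : PDAG V) (p : List V) : Prop :=
  2 ≤ p.length ∧ p.Nodup ∧ ∀ e ∈ consPairs p, G.dir e.1 e.2

/-- `p` is a non-causal path: it contains at least one edge directed backwards. -/
def NonCausal (G : PDAG V) (p : List V) : Prop :=
  G.IsPath p ∧ ∃ e ∈ consPairs p, G.dir e.2 e.1

/-- `p` is b-possibly causal in `G`: there is no edge `V_i ← V_j` for `i < j`. -/
def BPossCausal (G : PDAG V) (p : List V) : Prop :=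
  G.IsPath p ∧ ∀ i j : Fin p.length, (i : ℕ) < (j : ℕ) → ¬ G.dir (p.get j) (p.get i)

/-- `p` is b-non-causal in `G`: some edge `V_i ← V_j` with `i < j` exists in `G`. -/
def BNonCausal (G : PDAG V) (p : List V) : Prop :=
  G.IsPath p ∧ ∃ i j : Fin p.length, (i : ℕ) < (j : ℕ) ∧ G.dir (p.get j) (p.get i)

/-- A path with no edge on it pointing backwards (possibly causal in the local sense). -/
def LocalPossCausal (G : PDAG V) (p : List V) : Prop :=
  G.IsPath p ∧ ∀ e ∈ consPairs p, ¬ G.dir e.2 e.1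

/-- `p` is unshielded: the outer nodes of every consecutive triple are non-adjacent. -/
def Unshielded (G : PDAG V) (p : List V) : Prop :=
  ∀ t ∈ triples p, ¬ G.adj t.1 t.2.2

/-- The middle node of a triple is a collider. -/
def ColliderAt (G : PDAG V) (t : V × V × V) : Prop :=
  G.dir t.1 t.2.1 ∧ G.dir t.2.2 t.2.1

/-- The middle node of a triple is a definite non-collider. -/
def DefNonColliderAt (G : PDAG V) (t : V × V × V) : Prop :=
  G.dir t.2.1 t.1 ∨ G.dir t.2.1 t.2.2 ∨
    (G.undirE t.1 t.2.1 ∧ G.undirE t.2.1 t.2.2 ∧ ¬ G.adj t.1 t.2.2)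

/-- `p` is a definite status path. -/
def DefiniteStatus (G : PDAG V) (p : List V) : Prop :=
  ∀ t ∈ triples p, G.ColliderAt t ∨ G.DefNonColliderAt t

/-- `y` is a descendant of `x` in `G` (via directed paths; every node descends from itself). -/
def Desc (G : PDAG V) (x y : V) : Prop := x = y ∨ Relation.TransGen G.dir x y

/-- `p` is d-connecting given `Z`: every collider on `p` has a descendant in `Z`,
and every (definite) non-collider on `p` is not in `Z`. -/
def DConn (G : PDAG V) (p : List V) (Z : Set V) : Prop :=
  ∀ t ∈ triples p,
    (G.ColliderAt t → ∃ z ∈ Z, G.Desc t.2.1 z) ∧ (¬ G.ColliderAt t → t.2.1 ∉ Z)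

/-- `Z` blocks the path `p`. -/
def Blocked (G : PDAG V) (p : List V) (Z : Set V) : Prop := ¬ G.DConn p Z

/-- `G` is closed under Meek's orientation rules R1–R4 (a maximal PDAG). -/
def ClosedMeek (G : PDAG V) : Prop :=
  (∀ a b c, G.dir a b → G.undirE b c → ¬ G.adj a c → G.dir b c) ∧
  (∀ a b c, G.dir a b → G.dir b c → G.undirE a c → G.dir a c) ∧
  (∀ a b c d, G.undirE a b → G.undirE a c → G.undirE a d →
     G.dir c b → G.dir d b → ¬ G.adj c d → G.dir a b) ∧
  (∀ a b c d, G.undirE a b → G.undirE a c → G.undirE a d →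
     G.dir d c → G.dir b d → ¬ G.adj b c → G.dir a c)

/-- `G` is a DAG: it has no undirected edges. -/
def IsDAG (G : PDAG V) : Prop := ∀ x y, ¬ G.undir x y

/-- `G` and `H` have the same unshielded colliders. -/
def SameUC (G H : PDAG V) : Prop :=
  ∀ a b c, (G.dir a b ∧ G.dir c b ∧ ¬ G.adj a c) ↔ (H.dir a b ∧ H.dir c b ∧ ¬ H.adj a c)

/-- `H` is represented by `G`: same adjacencies, same unshielded colliders,
and every directed edge of `G` is in `H`. -/
def RepresentedBy (H G : PDAG V) : Prop :=
  (∀ x y, H.adj x y ↔ G.adj x y) ∧ SameUC H G ∧ ∀ x y, G.dir x y → H.dir x y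

/-- `p` is a proper path from (a member of) `X` to (a member of) `Y`:
only its first node lies in `X`. -/
def ProperPathFromTo (G : PDAG V) (X Y : Set V) (p : List V) : Prop :=
  G.IsPath p ∧ (∃ x ∈ X, p.head? = some x) ∧ (∃ y ∈ Y, p.getLast? = some y) ∧
    ∀ v ∈ p.tail, v ∉ X

/-- `w'` is a b-possible descendant of the node `w`. -/
def BPossDescNode (G : PDAG V) (w w' : V) : Prop :=
  w' = w ∨ ∃ p, G.BPossCausal p ∧ p.head? = some w ∧ p.getLast? = some w'

/-- The b-possible descendants of the node set `X` in `G`. -/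
def BPossDe (G : PDAG V) (X : Set V) : Set V :=
  {w | w ∈ X ∨ ∃ x ∈ X, ∃ p, G.BPossCausal p ∧ p.head? = some x ∧ p.getLast? = some w}

/-- The b-possible ancestors of the node set `X` in `G`. -/
def BPossAn (G : PDAG V) (X : Set V) : Set V :=
  {w | w ∈ X ∨ ∃ x ∈ X, ∃ p, G.BPossCausal p ∧ p.head? = some w ∧ p.getLast? = some x}

/-- The b-forbidden set relative to `(X, Y)` in `G`. -/
def BForb (G : PDAG V) (X Y : Set V) : Set V :=
  {w' | ∃ w p, w ∉ X ∧ G.ProperPathFromTo X Y p ∧ G.BPossCausal p ∧ w ∈ p ∧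
    G.BPossDescNode w w'}

/-- `G` is b-amenable relative to `(X, Y)`: every proper b-possibly causal path
from `X` to `Y` starts with a directed edge out of `X`. -/
def BAmenable (G : PDAG V) (X Y : Set V) : Prop :=
  ∀ p, G.ProperPathFromTo X Y p → G.BPossCausal p →
    ∀ a b, p.head? = some a → p.tail.head? = some b → G.dir a b

/-- The b-blocking condition: `Z` blocks every proper b-non-causal definite status
path from `X` to `Y` in `G`. -/
def BBlocking (G : PDAG V) (X Y Z : Set V) : Prop :=
  ∀ p, G.ProperPathFromTo X Y p → G.BNonCausal p → G.DefiniteStatus p → G.Blocked p Z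

/-- The b-adjustment criterion for `Z` relative to `(X, Y)` in `G`. -/
def BAdjCrit (G : PDAG V) (X Y Z : Set V) : Prop :=
  G.BAmenable X Y ∧ Z ∩ G.BForb X Y = ∅ ∧ G.BBlocking X Y Z

/-- In a DAG: `Z` blocks every proper non-causal path from `X` to `Y`. -/
def DagBlocking (D : PDAG V) (X Y Z : Set V) : Prop :=
  ∀ p, D.ProperPathFromTo X Y p → D.NonCausal p → D.Blocked p Z

/-- The canonical adjustment set `b-Adjust(X, Y, G)`. -/
def BAdjust (G : PDAG V) (X Y : Set V) : Set V :=
  G.BPossAn (X ∪ Y) \ (X ∪ Y ∪ G.BForb X Y)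

/-- `C` is a CPDAG: a maximal PDAG representing a Markov equivalence class of DAGs
in which every undirected edge is realized in both orientations by represented DAGs. -/
def IsCPDAG (C : PDAG V) : Prop :=
  C.ClosedMeek ∧ (∃ D : PDAG V, D.IsDAG ∧ RepresentedBy D C) ∧
  ∀ x y, C.undirE x y →
    (∃ D : PDAG V, D.IsDAG ∧ RepresentedBy D C ∧ D.dir x y) ∧
    (∃ D : PDAG V, D.IsDAG ∧ RepresentedBy D C ∧ D.dir y x)

end PDAG

namespace PDAG

variable {V : Type}

lemma length_consPairs (p : List V) : (consPairs p).length = p.length - 1 := by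
  simp [consPairs, List.length_zip, List.length_tail]

lemma getElem_idx_congr {l : List V} {a b : ℕ} (h : a = b) (ha : a < l.length) :
    l[a] = l[b]'(h ▸ ha) := by subst h; rfl

lemma getElem_consPairs (p : List V) (t : ℕ) (h : t < (consPairs p).length) :
    (consPairs p)[t] = (p[t]'(by have := length_consPairs p; omega),
      p[t+1]'(by have := length_consPairs p; omega)) := by
  have h' := length_consPairs p
  simp only [consPairs] at h ⊢
  rw [List.getElem_zip, List.getElem_tail]

lemma mem_consPairs_iff {p : List V} {e : V × V} :
    e ∈ consPairs p ↔ ∃ t, ∃ h : t + 1 < p.length, e = (p[t]'(by omega), p[t+1]) := by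
  have hl := length_consPairs p
  constructor
  · intro he
    obtain ⟨t, ht, rfl⟩ := List.mem_iff_getElem.mp he
    exact ⟨t, by omega, getElem_consPairs p t ht⟩
  · rintro ⟨t, h, rfl⟩
    have h2 : t < (consPairs p).length := by omega
    have := getElem_consPairs p t h2
    rw [← this]
    exact List.getElem_mem h2

lemma mem_triples_of : ∀ (p : List V) (m : ℕ) (h : m + 2 < p.length),
    ((p[m]'(by omega), p[m+1]'(by omega), p[m+2]'h) : V × V × V) ∈ triples p
  | [], m, h => by simp at h
  | [a], m, h => by simp at h
  | [a, b], m, h => by simp at h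
  | a :: b :: c :: rest, 0, h => by simp [triples]
  | a :: b :: c :: rest, m+1, h => by
    have ih := mem_triples_of (b :: c :: rest) m (by simp at h ⊢; omega)
    show _ ∈ (a, b, c) :: triples (b :: c :: rest)
    exact List.mem_cons_of_mem _ (by simpa using ih)

lemma dag_dir_total {D : PDAG V} (hD : D.IsDAG) {x y : V} (h : D.adj x y) :
    D.dir x y ∨ D.dir y x := by
  rcases h with h | h | h
  · exact Or.inl h
  · exact Or.inr h
  · rcases h with h | h
    · exact absurd h (hD x y)
    · exact absurd h (hD y x)

lemma desc_trans {D : PDAG V} {a b c : V} (h1 : D.Desc a b) (h2 : D.Desc b c) :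
    D.Desc a c := by
  rcases h1 with rfl | h1 <;> rcases h2 with rfl | h2
  exacts [Or.inl rfl, Or.inr h2, Or.inr h1, Or.inr (h1.trans h2)]

lemma head?_eq_getElem {l : List V} (h : 0 < l.length) : l.head? = some (l[0]) := by
  cases l with
  | nil => simp at h
  | cons a t => rfl

lemma getLast?_eq_getElem {l : List V} (h : 0 < l.length) :
    l.getLast? = some (l[l.length - 1]'(by omega)) := by
  have hne : l ≠ [] := List.length_pos_iff.mp h
  rw [List.getLast?_eq_getLast hne, List.getLast_eq_getElem]

lemma tail_head? {l : List V} (h : 1 < l.length) : l.tail.head? = some (l[1]) := by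
  have h2 : 0 < l.tail.length := by simp [List.length_tail]; omega
  rw [head?_eq_getElem h2, List.getElem_tail]

lemma getElem_mem_tail {l : List V} {m : ℕ} (h0 : 0 < m) (hm : m < l.length) :
    l[m] ∈ l.tail := by
  have h' : m - 1 < l.tail.length := by simp [List.length_tail]; omega
  have hmem := List.getElem_mem h'
  rw [List.getElem_tail] at hmem
  simpa only [show m - 1 + 1 = m from by omega] using hmem

lemma transGen_of_forward (D : PDAG V) (p : List V) : ∀ {a b : ℕ} (hb : b < p.length)
    (hab : a < b)
    (hfwd : ∀ t (h1 : a ≤ t) (h2 : t < b), D.dir (p[t]'(by omega)) (p[t+1]'(by omega))),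
    Relation.TransGen D.dir (p[a]'(by omega)) (p[b]'hb) := by
  intro a b
  induction b with
  | zero => omega
  | succ b ih =>
    intro hb hab hfwd
    have hedge := hfwd b (by omega) (by omega)
    rcases Nat.lt_or_ge a b with h | h
    · exact (ih (by omega) h (fun t h1 h2 => hfwd t h1 (by omega))).tail hedge
    · have : a = b := by omega
      subst this
      exact Relation.TransGen.single hedge

lemma exists_dpath (D : PDAG V) {w z : V} (h : Relation.TransGen D.dir w z) :
    ∃ q : List V, 2 ≤ q.length ∧ q.Nodup ∧ (∀ e ∈ consPairs q, D.dir e.1 e.2) ∧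
      q.head? = some w ∧ q.getLast? = some z := by
  induction h with
  | single h1 =>
    rename_i b
    have hwb : w ≠ b := by
      rintro rfl
      exact D.acyclic w (Relation.TransGen.single h1)
    refine ⟨[w, b], by simp, by simp [hwb], ?_, rfl, by simp⟩
    intro e he
    simp [consPairs] at he
    rw [he]
    exact h1
  | tail hwy hyz ih =>
    rename_i y z'
    obtain ⟨q, hlen, hnd, hdir, hhead, hlast⟩ := ih
    have hq0 : 0 < q.length := by omega
    have hqw : q[0]'hq0 = w := by
      rw [head?_eq_getElem hq0] at hhead
      exact Option.some.inj hhead.symm |>.symm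
    have hqy : q[q.length - 1]'(by omega) = y := by
      rw [getLast?_eq_getElem hq0] at hlast
      exact Option.some.inj hlast
    have hwz' : w ≠ z' := by
      rintro rfl
      exact D.acyclic w (hwy.tail hyz)
    by_cases hz : z' ∈ q
    · obtain ⟨m, hm, hqm⟩ := List.mem_iff_getElem.mp hz
      have hm0 : 0 < m := by
        rcases Nat.eq_zero_or_pos m with h' | h'
        · exfalso; apply hwz'
          rw [← hqw, ← hqm]
          exact getElem_idx_congr h'.symm hq0
        · exact h'
      have hmt : (q.take (m+1)).length = m + 1 := by simp; omega
      refine ⟨q.take (m+1), by omega, (List.take_sublist _ _).nodup hnd, ?_, ?_, ?_⟩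
      · intro e he
        obtain ⟨t, ht, rfl⟩ := mem_consPairs_iff.mp he
        rw [hmt] at ht
        have e1 : (q.take (m+1))[t]'(by rw [hmt]; omega) = q[t]'(by omega) := by
          rw [List.getElem_take]
        have e2 : (q.take (m+1))[t+1]'(by rw [hmt]; omega) = q[t+1]'(by omega) := by
          rw [List.getElem_take]
        rw [e1, e2]
        exact hdir _ (mem_consPairs_iff.mpr ⟨t, by omega, rfl⟩)
      · have h00 : 0 < (q.take (m+1)).length := by omega
        rw [head?_eq_getElem h00]
        rw [show (q.take (m+1))[0]'h00 = q[0]'hq0 from by rw [List.getElem_take]]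
        rw [hqw]
      · have h00 : 0 < (q.take (m+1)).length := by omega
        rw [getLast?_eq_getElem h00]
        have : (q.take (m+1))[(q.take (m+1)).length - 1]'(by omega) = q[m]'hm := by
          have h1 : (q.take (m+1)).length - 1 = m := by omega
          rw [getElem_idx_congr h1, List.getElem_take]
        rw [this, hqm]
    · refine ⟨q ++ [z'], by simp; omega, ?_, ?_, ?_, by simp⟩
      · rw [List.nodup_append]
        exact ⟨hnd, List.nodup_singleton _, by simp; exact fun a ha h => hz (h ▸ ha)⟩
      · intro e he
        obtain ⟨t, ht, rfl⟩ := mem_consPairs_iff.mp he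
        simp only [List.length_append, List.length_singleton] at ht
        by_cases htq : t + 1 < q.length
        · have e1 : (q ++ [z'])[t]'(by simp; omega) = q[t]'(by omega) :=
            List.getElem_append_left (by omega)
          have e2 : (q ++ [z'])[t+1]'(by simp; omega) = q[t+1]'htq :=
            List.getElem_append_left htq
          rw [e1, e2]
          exact hdir _ (mem_consPairs_iff.mpr ⟨t, htq, rfl⟩)
        · have htl : t = q.length - 1 := by omega
          have e1 : (q ++ [z'])[t]'(by simp; omega) = q[t]'(by omega) :=
            List.getElem_append_left (by omega)
          have e2 : (q ++ [z'])[t+1]'(by simp; omega) = z' := by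
            rw [List.getElem_append_right (by omega)]
            simp
          rw [e1, e2, getElem_idx_congr htl (by omega), hqy]
          exact hyz
      · rw [head?_eq_getElem (l := q ++ [z']) (by simp)]
        rw [show (q ++ [z'])[0]'(by simp) = q[0]'hq0 from
          List.getElem_append_left hq0, hqw]

lemma bPossDescNode_of_desc {D G : PDAG V} (hrep : RepresentedBy D G) {w z : V}
    (h : D.Desc w z) : G.BPossDescNode w z := by
  rcases h with rfl | h
  · exact Or.inl rfl
  right
  obtain ⟨q, hlen, hnd, hdir, hh, hl⟩ := exists_dpath D h
  refine ⟨q, ⟨⟨hlen, hnd, fun e he => (hrep.1 e.1 e.2).mp (Or.inl (hdir e he))⟩,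
    fun a b hab hGd => ?_⟩, hh, hl⟩
  have hDd : D.dir (q.get b) (q.get a) := hrep.2.2 _ _ hGd
  have hfwd : ∀ t (h1 : (a : ℕ) ≤ t) (h2 : t < (b : ℕ)),
      D.dir (q[t]'(by have := b.isLt; omega)) (q[t+1]'(by have := b.isLt; omega)) := by
    intro t h1 h2
    exact hdir _ (mem_consPairs_iff.mpr ⟨t, by have := b.isLt; omega, rfl⟩)
  have htg : Relation.TransGen D.dir (q.get a) (q.get b) := by
    simp only [List.get_eq_getElem]
    exact transGen_of_forward D q b.isLt hab hfwd
  exact D.acyclic _ (htg.tail hDd)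

lemma splice_length (p : List V) (i j : ℕ) (hij : i < j) (hj : j < p.length) :
    (p.take (i + 1) ++ p.drop j).length = (i + 1) + (p.length - j) := by
  simp [List.length_take, List.length_drop]
  omega

lemma splice_getElem_low {p q : List V} {i j : ℕ} (hq : q = p.take (i+1) ++ p.drop j)
    (hij : i < j) (hj : j < p.length) (a : ℕ) (hai : a ≤ i) (ha : a < q.length) :
    q[a] = p[a]'(by omega) := by
  subst hq
  rw [List.getElem_append_left (by simp; omega), List.getElem_take]

lemma splice_getElem_high {p q : List V} {i j : ℕ} (hq : q = p.take (i+1) ++ p.drop j)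
    (hij : i < j) (hj : j < p.length) (a : ℕ) (hia : i < a) (ha : a < q.length) :
    q[a] = p[j + (a - (i+1))]'(by
      subst hq; rw [splice_length p i j hij hj] at ha; omega) := by
  subst hq
  have htl : (p.take (i+1)).length = i + 1 := by simp; omega
  have hsl := splice_length p i j hij hj
  rw [List.getElem_append_right (by omega), List.getElem_drop]
  exact getElem_idx_congr (by omega) _

end PDAG

namespace PDAG

lemma core {V : Type} (G D : PDAG V) (X Y Z : Set V)
    (hamen : G.BAmenable X Y) (hforb : Z ∩ G.BForb X Y = ∅)
    (hD : D.IsDAG) (hrep : RepresentedBy D G)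
    (p : List V) (hp : D.ProperPathFromTo X Y p) (hnc : D.NonCausal p)
    (hconn : D.DConn p Z)
    (i j : ℕ) (h0 : 0 < i) (hij : i < j) (hj : j < p.length)
    (hadj : G.adj (p[i]'(Nat.lt_trans hij hj)) (p[j]'hj)) :
    G.ProperPathFromTo X Y (p.take (i + 1) ++ p.drop j) ∧
      G.BNonCausal (p.take (i + 1) ++ p.drop j) := by
  obtain ⟨⟨hplen, hpnd, hpadjD⟩, hxhead, hylast, htail⟩ := hp
  have hrepadj := hrep.1
  have hrepdir := hrep.2.2
  have hDadj : ∀ t (ht : t + 1 < p.length), D.adj (p[t]'(by omega)) (p[t+1]'ht) := by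
    intro t ht
    exact hpadjD _ (mem_consPairs_iff.mpr ⟨t, ht, rfl⟩)
  have hGadj : ∀ t (ht : t + 1 < p.length), G.adj (p[t]'(by omega)) (p[t+1]'ht) := by
    intro t ht; exact (hrepadj _ _).mp (hDadj t ht)
  set q := p.take (i + 1) ++ p.drop j with hqdef
  have hql : q.length = (i + 1) + (p.length - j) := splice_length p i j hij hj
  have hq2 : 2 ≤ q.length := by omega
  have hq0 : q[0]'(by omega) = p[0]'(by omega) :=
    splice_getElem_low hqdef hij hj 0 (by omega) (by omega)
  have hq1 : q[1]'(by omega) = p[1]'(by omega) :=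
    splice_getElem_low hqdef hij hj 1 (by omega) (by omega)
  have hqlast : q[q.length - 1]'(by omega) = p[p.length - 1]'(by omega) := by
    rw [splice_getElem_high hqdef hij hj (q.length - 1) (by omega) (by omega)]
    exact getElem_idx_congr (by omega) _
  -- q is a sublist of p
  have hsub : List.Sublist q p := by
    rw [hqdef]
    have h1 : List.Sublist (p.drop j) (p.drop (i+1)) := by
      have h2 := List.drop_sublist (j - (i+1)) (p.drop (i+1))
      rwa [List.drop_drop, show i + 1 + (j - (i+1)) = j from by omega] at h2
    have h3 := h1.append_left (p.take (i+1))
    rwa [List.take_append_drop] at h3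
  have hqnd : q.Nodup := hsub.nodup hpnd
  have hqadjG : ∀ e ∈ consPairs q, G.adj e.1 e.2 := by
    intro e he
    obtain ⟨t, ht, rfl⟩ := mem_consPairs_iff.mp he
    by_cases h1 : t + 1 ≤ i
    · rw [splice_getElem_low hqdef hij hj t (by omega) (by omega),
        splice_getElem_low hqdef hij hj (t+1) h1 ht]
      exact hGadj t (by omega)
    · by_cases h2 : t ≤ i
      · have hti : t = i := by omega
        rw [splice_getElem_low hqdef hij hj t h2 (by omega),
          splice_getElem_high hqdef hij hj (t+1) (by omega) ht,
          getElem_idx_congr (show j + (t+1-(i+1)) = j from by omega) (by omega),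
          getElem_idx_congr (show t = i from hti) (by omega)]
        exact hadj
      · rw [splice_getElem_high hqdef hij hj t (by omega) (by omega),
          splice_getElem_high hqdef hij hj (t+1) (by omega) ht,
          getElem_idx_congr (show j + (t+1-(i+1)) = j + (t-(i+1)) + 1 from by omega) (by omega)]
        exact hGadj (j + (t - (i+1))) (by omega)
  have hisq : G.IsPath q := ⟨hq2, hqnd, hqadjG⟩
  have hqhead : q.head? = some (p[0]'(by omega)) := by
    rw [head?_eq_getElem (by omega : 0 < q.length), hq0]
  have hqlast? : q.getLast? = some (p[p.length - 1]'(by omega)) := by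
    rw [getLast?_eq_getElem (by omega : 0 < q.length), hqlast]
  have hphead : p.head? = some (p[0]'(by omega)) := head?_eq_getElem (by omega)
  have hplast : p.getLast? = some (p[p.length - 1]'(by omega)) := getLast?_eq_getElem (by omega)
  obtain ⟨x, hxX, hxh⟩ := hxhead
  obtain ⟨y, hyY, hyl⟩ := hylast
  have hx0 : p[0]'(by omega) ∈ X := by
    have := hxh.symm.trans hphead
    rwa [← Option.some.inj this]
  have hyn : p[p.length - 1]'(by omega) ∈ Y := by
    have := hyl.symm.trans hplast
    rwa [← Option.some.inj this]
  have hqtail : ∀ v ∈ q.tail, v ∈ p.tail := by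
    intro v hv
    obtain ⟨t, ht, rfl⟩ := List.mem_iff_getElem.mp hv
    have ht' : t + 1 < q.length := by
      simp only [List.length_tail] at ht; omega
    rw [List.getElem_tail]
    by_cases h1 : t + 1 ≤ i
    · rw [splice_getElem_low hqdef hij hj (t+1) h1 ht']
      exact getElem_mem_tail (by omega) _
    · rw [splice_getElem_high hqdef hij hj (t+1) (by omega) ht']
      exact getElem_mem_tail (by omega) _
  have hqproper : G.ProperPathFromTo X Y q :=
    ⟨hisq, ⟨_, hx0, hqhead⟩, ⟨_, hyn, hqlast?⟩, fun v hv => htail v (hqtail v hv)⟩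
  refine ⟨hqproper, hisq, ?_⟩
  by_contra hcon
  have hB : ∀ (a b : Fin q.length), (a : ℕ) < (b : ℕ) → ¬ G.dir (q.get b) (q.get a) := by
    intro a b hab hd
    exact hcon ⟨a, b, hab, hd⟩
  have hbposs : G.BPossCausal q := ⟨hisq, hB⟩
  have hqth : q.tail.head? = some (p[1]'(by omega)) := by
    rw [tail_head? (by omega : 1 < q.length), hq1]
  have hd01G : G.dir (p[0]'(by omega)) (p[1]'(by omega)) :=
    hamen q hqproper hbposs _ _ hqhead hqth
  have hd01 : D.dir (p[0]'(by omega)) (p[1]'(by omega)) := hrepdir _ _ hd01G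
  -- minimal backward edge
  classical
  have hPex : ∃ r, ∃ hr : r + 1 < p.length, D.dir (p[r+1]'hr) (p[r]'(by omega)) := by
    obtain ⟨e, he, hde⟩ := hnc.2
    obtain ⟨t, ht, rfl⟩ := mem_consPairs_iff.mp he
    exact ⟨t, ht, hde⟩
  obtain ⟨hr1, hrdir⟩ := Nat.find_spec hPex
  set r := Nat.find hPex with hrdef
  have hfwd : ∀ t (htr : t < r), D.dir (p[t]'(by omega)) (p[t+1]'(by omega)) := by
    intro t htr
    have hnb := Nat.find_min hPex htr
    rcases dag_dir_total hD (hDadj t (by omega)) with h | h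
    · exact h
    · exact absurd ⟨(by omega : t + 1 < p.length), h⟩ hnb
  have hr0 : 0 < r := by
    by_contra hr0'
    have hr00 : r = 0 := by omega
    have e1 : p[r+1]'hr1 = p[1]'(by omega) := getElem_idx_congr (by omega) _
    have e2 : p[r]'(by omega : r < p.length) = p[0]'(by omega) := getElem_idx_congr (by omega) _
    have h := hrdir
    rw [e1, e2] at h
    exact D.acyclic _ ((Relation.TransGen.single hd01).tail h)
  have htrip : ((p[r-1]'(by omega), p[r]'(by omega), p[r+1]'hr1) : V × V × V) ∈ triples p := by
    have h := mem_triples_of p (r-1) (by omega)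
    simpa only [show r-1+1 = r from by omega, show r-1+2 = r+1 from by omega] using h
  have hcoll : D.ColliderAt (p[r-1]'(by omega), p[r]'(by omega), p[r+1]'hr1) := by
    constructor
    · have h := hfwd (r-1) (by omega)
      simpa only [show r-1+1 = r from by omega] using h
    · exact hrdir
  obtain ⟨z, hzZ, hdesc⟩ := (hconn _ htrip).1 hcoll
  have hdesc1 : D.Desc (p[1]'(by omega)) z := by
    refine desc_trans (b := p[r]'(by omega)) ?_ hdesc
    rcases Nat.lt_or_ge 1 r with h | h
    · exact Or.inr (transGen_of_forward D p (by omega) h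
        (fun t h1 h2 => hfwd t (by omega)))
    · have : r = 1 := by omega
      left
      rw [getElem_idx_congr this.symm]
  have hp1X : p[1]'(by omega) ∉ X := htail _ (getElem_mem_tail (by omega) (by omega))
  have hq1mem : p[1]'(by omega) ∈ q := List.mem_iff_getElem.mpr ⟨1, by omega, hq1⟩
  have hzF : z ∈ G.BForb X Y :=
    ⟨p[1]'(by omega), q, hp1X, hqproper, hbposs, hq1mem, bPossDescNode_of_desc hrep hdesc1⟩
  have hzmem : z ∈ Z ∩ G.BForb X Y := ⟨hzZ, hzF⟩
  rw [hforb] at hzmem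
  exact hzmem

end PDAG

/-- splicing a proper non-causal d-connecting path of a represented DAG
along an edge `⟨V_i, V_j⟩` of `G` yields a proper b-non-causal path in `G`; in particular
the corresponding path itself is proper and b-non-causal in `G`. -/
theorem stmt8 {V : Type} (G D : PDAG V) (hG : G.ClosedMeek) (X Y Z : Set V)
    (hdisj : Disjoint X Y ∧ Disjoint Z X ∧ Disjoint Z Y)
    (hamen : G.BAmenable X Y) (hforb : Z ∩ G.BForb X Y = ∅)
    (hD : D.IsDAG) (hrep : PDAG.RepresentedBy D G)
    (p : List V) (hp : D.ProperPathFromTo X Y p) (hnc : D.NonCausal p)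
    (hconn : D.DConn p Z)
    (i j : ℕ) (h0 : 0 < i) (hij : i < j) (hj : j < p.length)
    (hadj : G.adj (p.get ⟨i, Nat.lt_trans hij hj⟩) (p.get ⟨j, hj⟩)) :
    (G.ProperPathFromTo X Y (p.take (i + 1) ++ p.drop j) ∧
      G.BNonCausal (p.take (i + 1) ++ p.drop j)) ∧
    (G.ProperPathFromTo X Y p ∧ G.BNonCausal p) := by
  have hadj' : G.adj (p[i]'(Nat.lt_trans hij hj)) (p[j]'hj) := by
    simpa [List.get_eq_getElem] using hadj
  have h1 := PDAG.core G D X Y Z hamen hforb hD hrep p hp hnc hconn i j h0 hij hj hadj'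
  have hadj2 : G.adj (p[i]'(by omega)) (p[i+1]'(by omega)) :=
    (hrep.1 _ _).mp (hp.1.2.2 _ (PDAG.mem_consPairs_iff.mpr ⟨i, by omega, rfl⟩))
  have h2 := PDAG.core G D X Y Z hamen hforb hD hrep p hp hnc hconn i (i+1) h0
    (Nat.lt_succ_self i) (by omega) hadj2
  rw [List.take_append_drop] at h2
  exact ⟨h1, h2⟩
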